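/- The function f(φ) = sin(φ)/(1 + sin(φ/2)) on the interval (0, 2π/3] attains its maximum at φ₀ = 2·arctan(√((√5−1)/2)), and its maximum value is 2·((√5−1)/2)^{5/2}. -/

import Mathlib

open Real

/-- The function `f(φ) = sin φ / (1 + sin (φ/2))` on `(0, 2π/3]` attains its maximum
at `φ₀ = 2·arctan √((√5−1)/2)`, with maximum value `2·((√5−1)/2)^(5/2)`. -/
theorem max_of_sin_ratio :
    let f : ℝ → ℝ := fun φ => Real.sin φ / (1 + Real.sin (φ / 2))
    let φ₀ : ℝ := 2 * Real.arctan (Real.sqrt ((Real.sqrt 5 - 1) / 2))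
    φ₀ ∈ Set.Ioc 0 (2 * π / 3) ∧
    (∀ φ ∈ Set.Ioc (0 : ℝ) (2 * π / 3), f φ ≤ f φ₀) ∧
    f φ₀ = 2 * ((Real.sqrt 5 - 1) / 2) ^ ((5 : ℝ) / 2) := by
  intro f φ₀
  set g : ℝ := (Real.sqrt 5 - 1) / 2 with hg
  have h5 : Real.sqrt 5 ^ 2 = 5 := Real.sq_sqrt (by norm_num)
  have h5lb : (2 : ℝ) < Real.sqrt 5 := by
    nlinarith [Real.sqrt_nonneg 5, h5]
  have h5ub : Real.sqrt 5 < 3 := by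
    nlinarith [Real.sqrt_nonneg 5, h5]
  have hg0 : 0 < g := by rw [hg]; linarith
  have hg1 : g < 1 := by rw [hg]; linarith
  have hg2 : g ^ 2 = 1 - g := by rw [hg]; nlinarith [h5]
  have hsg0 : 0 < Real.sqrt g := Real.sqrt_pos.mpr hg0
  have hsg2 : Real.sqrt g ^ 2 = g := Real.sq_sqrt hg0.le
  have hg5 : g ^ 5 = 5 * g - 3 := by linear_combination (g^3 - g^2 + 2*g - 3) * hg2
  -- sin and cos of arctan √g
  have h1g : 1 + g = 1 / g := by field_simp; nlinarith [hg2]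
  have hsqrt1g : Real.sqrt (1 + g) = 1 / Real.sqrt g := by
    rw [h1g, one_div, Real.sqrt_inv, one_div]
  have hsint : Real.sin (Real.arctan (Real.sqrt g)) = g := by
    rw [Real.sin_arctan, hsg2, hsqrt1g]
    field_simp
    exact hsg2
  have hcost : Real.cos (Real.arctan (Real.sqrt g)) = Real.sqrt g := by
    rw [Real.cos_arctan, hsg2, hsqrt1g]
    field_simp
  have hfval : f φ₀ = 2 * g ^ 2 * Real.sqrt g := by
    show Real.sin (2 * Real.arctan (Real.sqrt g)) /
      (1 + Real.sin (2 * Real.arctan (Real.sqrt g) / 2)) = _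
    rw [show 2 * Real.arctan (Real.sqrt g) / 2 = Real.arctan (Real.sqrt g) from by ring,
      Real.sin_two_mul, hsint, hcost, h1g]
    field_simp
  have hrpow : (2 : ℝ) * g ^ ((5 : ℝ) / 2) = 2 * g ^ 2 * Real.sqrt g := by
    have h52 : ((5 : ℝ) / 2) = (2 : ℝ) + 1 / 2 := by norm_num
    rw [h52, Real.rpow_add hg0, Real.rpow_two, ← Real.sqrt_eq_rpow]
    ring
  have hπ := Real.pi_pos
  have harcpos : 0 < Real.arctan (Real.sqrt g) := by
    have := Real.arctan_strictMono hsg0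
    rwa [Real.arctan_zero] at this
  refine ⟨⟨by exact mul_pos two_pos harcpos, ?_⟩, ?_, by rw [hfval, hrpow]⟩
  · -- φ₀ ≤ 2π/3
    have h3 : Real.sqrt g ≤ Real.sqrt 3 := Real.sqrt_le_sqrt (by linarith)
    have harc := Real.arctan_strictMono.monotone h3
    rw [← Real.tan_pi_div_three, Real.arctan_tan (by linarith) (by linarith)] at harc
    show 2 * Real.arctan (Real.sqrt g) ≤ 2 * π / 3
    linarith
  · intro φ hφ
    obtain ⟨hφ0, hφub⟩ := hφ
    set s := Real.sin (φ / 2) with hs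
    set c := Real.cos (φ / 2) with hc
    have hs0 : 0 < s := Real.sin_pos_of_pos_of_lt_pi (by linarith) (by linarith)
    have hs1 : s ≤ 1 := Real.sin_le_one _
    have hc0 : 0 ≤ c := Real.cos_nonneg_of_mem_Icc ⟨by linarith, by linarith⟩
    have hcs : c ^ 2 = 1 - s ^ 2 := by
      have := Real.sin_sq_add_cos_sq (φ / 2); linarith
    have h2 : Real.sin φ = 2 * s * c := by
      rw [show φ = 2 * (φ / 2) from by ring, Real.sin_two_mul]
    have hfφ : f φ = 2 * s * c / (1 + s) := by
      show Real.sin φ / (1 + Real.sin (φ / 2)) = _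
      rw [h2]
    rw [hfφ, hfval, div_le_iff₀ (by linarith)]
    have e1 : (2 * s * c) ^ 2 = 4 * s ^ 2 * (1 - s ^ 2) := by
      linear_combination (4 * s ^ 2) * hcs
    have e2 : (2 * g ^ 2 * Real.sqrt g * (1 + s)) ^ 2 = 4 * (5 * g - 3) * (1 + s) ^ 2 := by
      linear_combination (4 * g ^ 4 * (1 + s) ^ 2) * hsg2 + (4 * (1 + s) ^ 2) * hg5
    have hid : 4 * (5 * g - 3) * (1 + s) ^ 2 - 4 * s ^ 2 * (1 - s ^ 2)
        = 4 * (1 + s) * (s - g) ^ 2 * (s + 2 * g - 1) := by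
      linear_combination (4 * (1 + s) * (3 * s - 2 * g + 3)) * hg2
    have hfac : 0 ≤ 4 * (1 + s) * (s - g) ^ 2 * (s + 2 * g - 1) := by
      apply mul_nonneg (mul_nonneg (by linarith) (sq_nonneg _))
      rw [hg]; nlinarith [hs0]
    have key : (2 * s * c) ^ 2 ≤ (2 * g ^ 2 * Real.sqrt g * (1 + s)) ^ 2 := by
      rw [e1, e2]; linarith
    have ha : 0 ≤ 2 * s * c := mul_nonneg (mul_nonneg two_pos.le hs0.le) hc0
    have hb : 0 < 2 * g ^ 2 * Real.sqrt g * (1 + s) :=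
      mul_pos (mul_pos (mul_pos two_pos (pow_pos hg0 2)) hsg0) (by linarith)
    clear_value g s c
    clear * - key ha hb
    nlinarith [key, ha, hb]
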